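/- arXiv:1301.1000 — 8 statements merged into one kernel-verified Lean document; each statement's English description precedes it below -/
import Mathlib

section
/- Every facially exposed closed convex cone K ⊆ ℝ³ is nice, i.e., for every face F of K, the set K* + F^⊥ is closed. -/
open Pointwise RealInnerProductSpace

/-- `F` is a face of the cone `K`: a nonempty convex subset such that
`x + y ∈ F` with `x, y ∈ K` implies `x, y ∈ F`. -/
def IsFaceOfCone {E : Type*} [NormedAddCommGroup E] [InnerProductSpace ℝ E]
    (K F : Set E) : Prop :=
  F.Nonempty ∧ F ⊆ K ∧ Convex ℝ F ∧
    ∀ x y, x ∈ K → y ∈ K → x + y ∈ F → x ∈ F ∧ y ∈ F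

/-- `F` is an exposed face of the cone `K`: `F = K ∩ H` for a supporting
hyperplane `H` of `K` through the origin. -/
def IsExposedFaceOfCone {E : Type*} [NormedAddCommGroup E] [InnerProductSpace ℝ E]
    (K F : Set E) : Prop :=
  ∃ y : E, (∀ x ∈ K, ⟪y, x⟫ ≤ 0) ∧ F = {x ∈ K | ⟪y, x⟫ = 0}

/-- A vector orthogonal to a generating set lies in the orthogonal complement of its span. -/
lemma aux_mem_orth_span {E : Type*} [NormedAddCommGroup E] [InnerProductSpace ℝ E]
    {s : Set E} {v : E} (h : ∀ u ∈ s, ⟪u, v⟫ = 0) : v ∈ (Submodule.span ℝ s)ᗮ := by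
  rw [Submodule.mem_orthogonal]
  intro u hu
  induction hu using Submodule.span_induction with
  | mem x hx => exact h x hx
  | zero => simp
  | add x y _ _ hx hy => rw [inner_add_left, hx, hy, add_zero]
  | smul c x _ hx => rw [real_inner_smul_left, hx, mul_zero]

/-- In `ℝ³`, a vector orthogonal to three pairwise-orthogonal nonzero vectors is zero. -/
lemma aux_ortho3 {f₀ z y v : EuclideanSpace ℝ (Fin 3)}
    (hf : f₀ ≠ 0) (hz : z ≠ 0) (hy : y ≠ 0)
    (h1 : ⟪f₀, z⟫ = 0) (h2 : ⟪f₀, y⟫ = 0) (h3 : ⟪z, y⟫ = 0)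
    (hv1 : ⟪f₀, v⟫ = 0) (hv2 : ⟪z, v⟫ = 0) (hv3 : ⟪y, v⟫ = 0) : v = 0 := by
  set b : Fin 3 → EuclideanSpace ℝ (Fin 3) := ![f₀, z, y] with hb
  have hbv : ∀ i, ⟪b i, v⟫ = 0 := by
    intro i
    fin_cases i
    · exact hv1
    · exact hv2
    · exact hv3
  have hne : ∀ i, b i ≠ 0 := by
    intro i
    fin_cases i
    · exact hf
    · exact hz
    · exact hy
  have h1' : ⟪z, f₀⟫ = 0 := by rw [real_inner_comm]; exact h1
  have h2' : ⟪y, f₀⟫ = 0 := by rw [real_inner_comm]; exact h2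
  have h3' : ⟪y, z⟫ = 0 := by rw [real_inner_comm]; exact h3
  have horth : ∀ i j, i ≠ j → ⟪b i, b j⟫ = 0 := by
    intro i j hij
    fin_cases i <;> fin_cases j <;> first
      | exact absurd rfl hij
      | exact h1 | exact h2 | exact h3
      | exact h1' | exact h2' | exact h3'
  have hind : LinearIndependent ℝ b := linearIndependent_of_ne_zero_of_inner_eq_zero hne horth
  have hsp : Submodule.span ℝ (Set.range b) = ⊤ :=
    hind.span_eq_top_of_card_eq_finrank (by simp)
  have hvmem : v ∈ Submodule.span ℝ (Set.range b) := by rw [hsp]; trivial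
  obtain ⟨c, hc⟩ := Submodule.mem_span_range_iff_exists_fun ℝ |>.mp hvmem
  have hterm : ∀ i ∈ Finset.univ, ⟪c i • b i, v⟫ = (0:ℝ) := fun i _ => by
    rw [real_inner_smul_left, hbv i, mul_zero]
  have hz0 : ⟪v, v⟫ = 0 := by
    nth_rewrite 1 [← hc]
    rw [sum_inner]
    exact Finset.sum_eq_zero hterm
  exact inner_self_eq_zero.mp hz0

/-- Compactness argument: if no unit vector of `K` is simultaneously in the kernel of `y`
and nonpositive against `z`, then some shift `z - t • y` is nonnegative on `K`. -/
lemma aux_exists_shift {K : Set (EuclideanSpace ℝ (Fin 3))} (hK : IsClosed K)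
    (hsm : ∀ ⦃c : ℝ⦄ ⦃x : EuclideanSpace ℝ (Fin 3)⦄, 0 < c → x ∈ K → c • x ∈ K)
    {z y : EuclideanSpace ℝ (Fin 3)}
    (hy : ∀ x ∈ K, ⟪y, x⟫ ≤ 0)
    (hlim : ∀ u ∈ K, ‖u‖ = 1 → ⟪y, u⟫ = 0 → ⟪z, u⟫ ≤ 0 → False) :
    ∃ t : ℝ, ∀ x ∈ K, 0 ≤ ⟪x, z - t • y⟫ := by
  by_contra hcon
  push_neg at hcon
  have h' : ∀ n : ℕ, ∃ x ∈ K, ⟪x, z - ((n : ℝ) + 1) • y⟫ < 0 := fun n => hcon ((n : ℝ) + 1)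
  choose x hxK hxlt using h'
  have hx0 : ∀ n, x n ≠ 0 := by
    intro n h
    have := hxlt n
    rw [h, inner_zero_left] at this
    exact lt_irrefl 0 this
  set u : ℕ → EuclideanSpace ℝ (Fin 3) := fun n => ‖x n‖⁻¹ • x n with hu
  have huK : ∀ n, u n ∈ K := fun n =>
    hsm (inv_pos.mpr (norm_pos_iff.mpr (hx0 n))) (hxK n)
  have hun : ∀ n, ‖u n‖ = 1 := by
    intro n
    rw [hu]
    simp only [norm_smul, norm_inv, norm_norm]
    rw [inv_mul_cancel₀ (norm_ne_zero_iff.mpr (hx0 n))]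
  have hult : ∀ n : ℕ, ⟪u n, z - ((n : ℝ) + 1) • y⟫ < 0 := by
    intro n
    rw [hu]
    simp only [real_inner_smul_left]
    exact mul_neg_of_pos_of_neg (inv_pos.mpr (norm_pos_iff.mpr (hx0 n))) (hxlt n)
  have hkey : ∀ n : ℕ, ⟪u n, z⟫ < ((n : ℝ) + 1) * ⟪u n, y⟫ := by
    intro n
    have := hult n
    rw [inner_sub_right, real_inner_smul_right] at this
    linarith
  have huy_le : ∀ n, ⟪u n, y⟫ ≤ 0 := by
    intro n
    rw [real_inner_comm]
    exact hy _ (huK n)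
  have huz_lb : ∀ n : ℕ, -‖z‖ ≤ ⟪u n, z⟫ := by
    intro n
    have := abs_real_inner_le_norm (u n) z
    rw [hun n, one_mul] at this
    linarith [abs_nonneg (⟪u n, z⟫), neg_abs_le (⟪u n, z⟫)]
  have huy_lb : ∀ n : ℕ, -‖z‖ / ((n : ℝ) + 1) ≤ ⟪u n, y⟫ := by
    intro n
    have hpos : (0 : ℝ) < (n : ℝ) + 1 := by positivity
    rw [div_le_iff₀ hpos]
    have := hkey n
    have := huz_lb n
    nlinarith
  obtain ⟨u₀, hu₀s, φ, hφ, hconv⟩ :=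
    (isCompact_sphere (0 : EuclideanSpace ℝ (Fin 3)) 1).tendsto_subseq
      (fun n => mem_sphere_zero_iff_norm.mpr (hun n))
  have hu₀K : u₀ ∈ K := hK.mem_of_tendsto hconv (Filter.Eventually.of_forall fun k => huK _)
  have hu₀n : ‖u₀‖ = 1 := mem_sphere_zero_iff_norm.mp hu₀s
  have Ty : Filter.Tendsto (fun k => ⟪u (φ k), y⟫) Filter.atTop (nhds ⟪u₀, y⟫) :=
    (hconv.inner tendsto_const_nhds)
  have Tz : Filter.Tendsto (fun k => ⟪u (φ k), z⟫) Filter.atTop (nhds ⟪u₀, z⟫) :=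
    (hconv.inner tendsto_const_nhds)
  have Tlow : Filter.Tendsto (fun k : ℕ => -‖z‖ / ((k : ℝ) + 1)) Filter.atTop (nhds 0) := by
    have := tendsto_one_div_add_atTop_nhds_zero_nat.const_mul (-‖z‖)
    simpa [div_eq_mul_inv, mul_comm, mul_assoc, one_div] using this
  have hyu₀ : ⟪u₀, y⟫ = 0 := by
    have hsq : Filter.Tendsto (fun k => ⟪u (φ k), y⟫) Filter.atTop (nhds 0) := by
      refine tendsto_of_tendsto_of_tendsto_of_le_of_le Tlow tendsto_const_nhds
        (fun k => ?_) (fun k => huy_le (φ k))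
      have hk1 : (0:ℝ) < (k : ℝ) + 1 := by positivity
      have hk2 : (0:ℝ) < (φ k : ℝ) + 1 := by positivity
      have hkle : (k : ℝ) + 1 ≤ (φ k : ℝ) + 1 := by
        have h : k ≤ φ k := hφ.le_apply
        have h' : (k : ℝ) ≤ (φ k : ℝ) := Nat.cast_le.mpr h
        linarith
      have hmono : -‖z‖ / ((k : ℝ) + 1) ≤ -‖z‖ / ((φ k : ℝ) + 1) := by
        rw [div_le_div_iff₀ hk1 hk2]
        nlinarith [norm_nonneg z]
      linarith [huy_lb (φ k)]
    exact tendsto_nhds_unique Ty hsq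
  have hzu₀ : ⟪u₀, z⟫ ≤ 0 := by
    refine le_of_tendsto Tz (Filter.Eventually.of_forall fun k => ?_)
    have h1 := hkey (φ k)
    have h2 := huy_le (φ k)
    have h3 : (0:ℝ) < (φ k : ℝ) + 1 := by positivity
    nlinarith
  exact hlim u₀ hu₀K hu₀n (by rw [real_inner_comm]; exact hyu₀)
    (by rw [real_inner_comm]; exact hzu₀)

set_option maxHeartbeats 1000000

theorem stmt_3 (K : ConvexCone ℝ (EuclideanSpace ℝ (Fin 3)))
    (hK : IsClosed (K : Set (EuclideanSpace ℝ (Fin 3))))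
    (hexp : ∀ F, IsFaceOfCone (K : Set (EuclideanSpace ℝ (Fin 3))) F →
      IsExposedFaceOfCone (K : Set (EuclideanSpace ℝ (Fin 3))) F)
    (F : Set (EuclideanSpace ℝ (Fin 3)))
    (hF : IsFaceOfCone (K : Set (EuclideanSpace ℝ (Fin 3))) F) :
    IsClosed ({y : EuclideanSpace ℝ (Fin 3) | ∀ x ∈ K, 0 ≤ ⟪x, y⟫} +
      ((Submodule.span ℝ F)ᗮ : Set (EuclideanSpace ℝ (Fin 3)))) := by
  classical
  obtain ⟨y, hy, hFe⟩ := hexp F hF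
  obtain ⟨⟨x₀, hx₀F⟩, hFK, hFconv, hface⟩ := hF
  set V : Submodule ℝ (EuclideanSpace ℝ (Fin 3)) := Submodule.span ℝ F with hV
  -- `0 ∈ K`
  have h0K : (0 : EuclideanSpace ℝ (Fin 3)) ∈ (K : Set (EuclideanSpace ℝ (Fin 3))) := by
    rcases eq_or_ne x₀ 0 with h | h
    · exact h ▸ hFK hx₀F
    · have htd : Filter.Tendsto (fun n : ℕ => (1 / ((n : ℝ) + 1)) • x₀) Filter.atTop
          (nhds (0 : EuclideanSpace ℝ (Fin 3))) := by
        simpa using (tendsto_one_div_add_atTop_nhds_zero_nat (𝕜 := ℝ)).smul_const x₀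
      exact hK.mem_of_tendsto htd (Filter.Eventually.of_forall fun n =>
        K.smul_mem (by positivity) (hFK hx₀F))
  have h0F : (0 : EuclideanSpace ℝ (Fin 3)) ∈ F := by
    rw [hFe]; exact ⟨h0K, by simp⟩
  have hyV : y ∈ Vᗮ := by
    refine aux_mem_orth_span fun f hf => ?_
    rw [real_inner_comm]
    rw [hFe] at hf
    exact hf.2
  -- it suffices to identify the sum with the (closed) dual cone of `F`
  suffices hS : {y : EuclideanSpace ℝ (Fin 3) | ∀ x ∈ K, 0 ≤ ⟪x, y⟫} +
      ((Submodule.span ℝ F)ᗮ : Set (EuclideanSpace ℝ (Fin 3))) =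
      {z : EuclideanSpace ℝ (Fin 3) | ∀ f ∈ F, 0 ≤ ⟪f, z⟫} by
    rw [hS]
    have : {z : EuclideanSpace ℝ (Fin 3) | ∀ f ∈ F, 0 ≤ ⟪f, z⟫} =
        ⋂ f ∈ F, {z : EuclideanSpace ℝ (Fin 3) | 0 ≤ ⟪f, z⟫} := by
      ext w; simp
    rw [this]
    exact isClosed_biInter fun f _ =>
      isClosed_le continuous_const (Continuous.inner continuous_const continuous_id)
  apply Set.Subset.antisymm
  · rintro ζ ⟨k, hk, w, hw, rfl⟩ f hf
    have h1 : 0 ≤ ⟪f, k⟫ := hk f (hFK hf)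
    have h2 : ⟪f, w⟫ = 0 :=
      (Submodule.mem_orthogonal _ w).mp hw f (Submodule.subset_span hf)
    rw [inner_add_right, h2]
    linarith
  · intro z hz
    -- replace `z` by its projection onto `V`
    by_cases hy0 : y = 0
    · -- then `F = K` and `z` is itself in the dual cone
      have hFK' : F = (K : Set (EuclideanSpace ℝ (Fin 3))) := by
        rw [hFe, hy0]; ext x; simp
      have hzK : ∀ x ∈ K, 0 ≤ ⟪x, z⟫ := by
        intro x hx
        exact hz x (by rw [hFK']; exact hx)
      have : z = z + 0 := by abel
      rw [this]
      exact Set.add_mem_add hzK (Submodule.zero_mem _)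
    set z₁ : EuclideanSpace ℝ (Fin 3) := (Submodule.orthogonalProjection V z : EuclideanSpace ℝ (Fin 3))
      with hz₁def
    have hz₁V : z₁ ∈ V := Submodule.coe_mem _
    have hzz₁ : z - z₁ ∈ Vᗮ := V.sub_starProjection_mem_orthogonal z
    have hz₁F : ∀ f ∈ F, 0 ≤ ⟪f, z₁⟫ := by
      intro f hf
      have h2 : ⟪f, z - z₁⟫ = 0 :=
        (Submodule.mem_orthogonal _ _).mp hzz₁ f (Submodule.subset_span hf)
      rw [inner_sub_right] at h2
      have := hz f hf
      linarith
    suffices hkk : ∃ k : EuclideanSpace ℝ (Fin 3),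
        (∀ x ∈ K, 0 ≤ ⟪x, k⟫) ∧ z₁ - k ∈ Vᗮ by
      obtain ⟨k, hk, hkV⟩ := hkk
      have hzsplit : z = k + ((z₁ - k) + (z - z₁)) := by abel
      rw [hzsplit]
      exact Set.add_mem_add hk (Submodule.add_mem _ hkV hzz₁)
    rcases eq_or_ne z₁ 0 with hz10 | hz10
    · exact ⟨0, fun x _ => by rw [inner_zero_right], by rw [hz10]; simpa using Submodule.zero_mem _⟩
    -- the face of `F` where `z₁` vanishes
    set Z : Set (EuclideanSpace ℝ (Fin 3)) := {x ∈ F | ⟪z₁, x⟫ = 0} with hZdef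
    have hZF : Z ⊆ F := fun x hx => hx.1
    have hZface : IsFaceOfCone (K : Set (EuclideanSpace ℝ (Fin 3))) Z := by
      refine ⟨⟨0, h0F, by rw [inner_zero_right]⟩, fun x hx => hFK hx.1, ?_, ?_⟩
      · intro a ha b hb s t hs ht hst
        refine ⟨hFconv ha.1 hb.1 hs ht hst, ?_⟩
        rw [inner_add_right, real_inner_smul_right, real_inner_smul_right, ha.2, hb.2]
        ring
      · intro a b haK hbK hab
        obtain ⟨haF, hbF⟩ := hface a b haK hbK hab.1
        have h1 : 0 ≤ ⟪z₁, a⟫ := by rw [real_inner_comm]; exact hz₁F a haF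
        have h2 : 0 ≤ ⟪z₁, b⟫ := by rw [real_inner_comm]; exact hz₁F b hbF
        have h3 : ⟪z₁, a⟫ + ⟪z₁, b⟫ = 0 := by
          rw [← inner_add_right]; exact hab.2
        exact ⟨⟨haF, by linarith⟩, ⟨hbF, by linarith⟩⟩
    obtain ⟨w, hw, hZe⟩ := hexp Z hZface
    by_cases hZ0 : ∀ x ∈ Z, x = (0 : EuclideanSpace ℝ (Fin 3))
    · -- compactness case: `Z = {0}`
      have hlim : ∀ u ∈ (K : Set (EuclideanSpace ℝ (Fin 3))), ‖u‖ = 1 → ⟪y, u⟫ = 0 →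
          ⟪z₁, u⟫ ≤ 0 → False := by
        intro u huK hun hyu hzu
        have huF : u ∈ F := by rw [hFe]; exact ⟨huK, hyu⟩
        have h1 : 0 ≤ ⟪u, z₁⟫ := hz₁F u huF
        have huZ : u ∈ Z := ⟨huF, by rw [real_inner_comm] at h1; linarith⟩
        have := hZ0 u huZ
        rw [this, norm_zero] at hun
        exact one_ne_zero hun.symm
      obtain ⟨t, ht⟩ := aux_exists_shift hK (fun c x hc hx => K.smul_mem hc hx) hy hlim
      refine ⟨z₁ - t • y, ht, ?_⟩
      have : z₁ - (z₁ - t • y) = t • y := by abel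
      rw [this]
      exact Submodule.smul_mem _ _ hyV
    -- main case: `Z` contains a nonzero vector `f₀`
    push_neg at hZ0
    obtain ⟨f₀, hf₀Z, hf₀0⟩ := hZ0
    have hf₀F : f₀ ∈ F := hf₀Z.1
    have hzf₀ : ⟪z₁, f₀⟫ = 0 := hf₀Z.2
    have hf₀z : ⟪f₀, z₁⟫ = 0 := by rw [real_inner_comm]; exact hzf₀
    have hyf₀ : ⟪y, f₀⟫ = 0 := by
      have := hf₀F; rw [hFe] at this; exact this.2
    have hf₀y : ⟪f₀, y⟫ = 0 := by rw [real_inner_comm]; exact hyf₀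
    have hz₁y : ⟪z₁, y⟫ = 0 := (Submodule.mem_orthogonal _ _).mp hyV z₁ hz₁V
    have hwf₀ : ⟪w, f₀⟫ = 0 := by
      have := hf₀Z; rw [hZe] at this; exact this.2
    have hf₀w : ⟪f₀, w⟫ = 0 := by rw [real_inner_comm]; exact hwf₀
    -- a vector of `F` on which `z₁` is strictly positive
    have hf₁ : ∃ f₁ ∈ F, 0 < ⟪z₁, f₁⟫ := by
      by_contra hcon
      push_neg at hcon
      have hall : ∀ f ∈ F, ⟪f, z₁⟫ = 0 := fun f hf =>
        le_antisymm (by rw [real_inner_comm]; exact hcon f hf) (hz₁F f hf)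
      have : z₁ ∈ Vᗮ := aux_mem_orth_span hall
      exact hz10 ((Submodule.mem_inf.mpr ⟨hz₁V, this⟩ : z₁ ∈ V ⊓ Vᗮ) |> fun h => by
        rw [Submodule.inf_orthogonal_eq_bot V] at h; exact h)
    obtain ⟨f₁, hf₁F, hf₁z⟩ := hf₁
    have hwf₁ : ⟪w, f₁⟫ < 0 := by
      rcases lt_or_eq_of_le (hw f₁ (hFK hf₁F)) with h | h
      · exact h
      · exfalso
        have : f₁ ∈ Z := by rw [hZe]; exact ⟨hFK hf₁F, h⟩
        rw [hZdef] at this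
        exact (ne_of_gt hf₁z) this.2
    -- project `f₁` off `f₀`
    have hf₀f₀ : ⟪f₀, f₀⟫ ≠ 0 := by
      rw [ne_eq, inner_self_eq_zero]; exact hf₀0
    set c : ℝ := ⟪f₀, f₁⟫ / ⟪f₀, f₀⟫ with hcdef
    set q : EuclideanSpace ℝ (Fin 3) := f₁ - c • f₀ with hqdef
    have hfq : ⟪f₀, q⟫ = 0 := by
      rw [hqdef, inner_sub_right, real_inner_smul_right, hcdef,
        div_mul_cancel₀ _ hf₀f₀, sub_self]
    have hyq : ⟪y, q⟫ = 0 := by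
      have hyf₁ : ⟪y, f₁⟫ = 0 := by
        have := hf₁F; rw [hFe] at this; exact this.2
      rw [hqdef, inner_sub_right, real_inner_smul_right, hyf₁, hyf₀]; ring
    have hzq : ⟪z₁, q⟫ = ⟪z₁, f₁⟫ := by
      rw [hqdef, inner_sub_right, real_inner_smul_right, hzf₀]; ring
    have hwq : ⟪w, q⟫ = ⟪w, f₁⟫ := by
      rw [hqdef, inner_sub_right, real_inner_smul_right, hwf₀]; ring
    have hzq_pos : 0 < ⟪z₁, q⟫ := by rw [hzq]; exact hf₁z
    have hwq_neg : ⟪w, q⟫ < 0 := by rw [hwq]; exact hwf₁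
    have hselfpos : ∀ v : EuclideanSpace ℝ (Fin 3), v ≠ 0 → (0:ℝ) < ⟪v, v⟫ := fun v hv =>
      lt_of_le_of_ne real_inner_self_nonneg (fun h => hv (inner_self_eq_zero.mp h.symm))
    have hz₁z₁ : (0:ℝ) < ⟪z₁, z₁⟫ := hselfpos _ hz10
    have hyy : (0:ℝ) < ⟪y, y⟫ := hselfpos _ hy0
    have hz₁z₁' : ⟪z₁, z₁⟫ ≠ 0 := ne_of_gt hz₁z₁
    have hyy' : ⟪y, y⟫ ≠ 0 := ne_of_gt hyy
    have hyz₁ : ⟪y, z₁⟫ = 0 := by rw [real_inner_comm]; exact hz₁y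
    -- q is a positive multiple of z₁
    set α : ℝ := ⟪z₁, q⟫ / ⟪z₁, z₁⟫ with hαdef
    have hα_pos : 0 < α := div_pos hzq_pos hz₁z₁
    have hq_eq : q = α • z₁ := by
      have h0 : q - α • z₁ = 0 := by
        refine aux_ortho3 hf₀0 hz10 hy0 hf₀z hf₀y hz₁y ?_ ?_ ?_
        · rw [inner_sub_right, real_inner_smul_right, hfq, hf₀z]; ring
        · rw [inner_sub_right, real_inner_smul_right, hαdef,
            div_mul_cancel₀ _ hz₁z₁', sub_self]
        · rw [inner_sub_right, real_inner_smul_right, hyq, hyz₁]; ring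
      have := sub_eq_zero.mp h0
      exact this
    -- w is a combination of z₁ and y
    set a : ℝ := ⟪z₁, w⟫ / ⟪z₁, z₁⟫ with hadef
    set b : ℝ := ⟪y, w⟫ / ⟪y, y⟫ with hbdef
    have hw_eq : w = a • z₁ + b • y := by
      have h0 : w - a • z₁ - b • y = 0 := by
        refine aux_ortho3 hf₀0 hz10 hy0 hf₀z hf₀y hz₁y ?_ ?_ ?_
        · rw [inner_sub_right, inner_sub_right, real_inner_smul_right, real_inner_smul_right,
            hf₀w, hf₀z, hf₀y]; ring
        · rw [inner_sub_right, inner_sub_right, real_inner_smul_right, real_inner_smul_right,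
            hz₁y, hadef, div_mul_cancel₀ _ hz₁z₁']
          ring
        · rw [inner_sub_right, inner_sub_right, real_inner_smul_right, real_inner_smul_right,
            hyz₁, hbdef, div_mul_cancel₀ _ hyy']
          ring
      rw [sub_sub, sub_eq_zero] at h0
      exact h0
    -- the coefficient `a` is negative
    have hwz₁ : ⟪w, z₁⟫ < 0 := by
      have h1 : ⟪w, q⟫ = α * ⟪w, z₁⟫ := by rw [hq_eq, real_inner_smul_right]
      nlinarith
    have ha_neg : a < 0 := by
      rw [hadef]
      apply div_neg_of_neg_of_pos _ hz₁z₁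
      rw [real_inner_comm]; exact hwz₁
    have ha_ne : a ≠ 0 := ne_of_lt ha_neg
    -- conclude
    refine ⟨a⁻¹ • w, ?_, ?_⟩
    · intro x hx
      rw [real_inner_smul_right]
      have h1 : ⟪x, w⟫ ≤ 0 := by rw [real_inner_comm]; exact hw x hx
      have h2 : a⁻¹ < 0 := inv_lt_zero.mpr ha_neg
      nlinarith
    · have hdecomp : z₁ - a⁻¹ • w = (-(a⁻¹ * b)) • y := by
        rw [hw_eq, smul_add, smul_smul, smul_smul, inv_mul_cancel₀ ha_ne, one_smul, neg_smul]
        abel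
      rw [hdecomp]
      exact Submodule.smul_mem _ _ hyV
end

section
/- The function φ(θ) = sin θ / (1 + sin θ − cos θ) is strictly decreasing on the interval (0, π/4]. -/
open Real Set

lemma key_eq (θ : ℝ) (h1 : 0 < θ) (h2 : θ ≤ π / 4) :
    Real.sin θ / (1 + Real.sin θ - Real.cos θ) = 1 / (1 + Real.tan (θ / 2)) := by
  have hs : 0 < Real.sin (θ / 2) := by
    apply Real.sin_pos_of_pos_of_lt_pi (by linarith)
    nlinarith [Real.pi_pos]
  have hc : 0 < Real.cos (θ / 2) := by
    apply Real.cos_pos_of_mem_Ioo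
    constructor <;> nlinarith [Real.pi_pos]
  have hsin : Real.sin θ = 2 * Real.sin (θ / 2) * Real.cos (θ / 2) := by
    rw [← Real.sin_two_mul]; ring_nf
  have hcos : Real.cos θ = 1 - 2 * Real.sin (θ / 2) ^ 2 := by
    rw [show θ = 2 * (θ / 2) by ring, Real.cos_two_mul']
    ring_nf
    linarith [Real.sin_sq_add_cos_sq (θ * (1/2))]
  rw [hsin, hcos, Real.tan_eq_sin_div_cos]
  rw [show 1 + 2 * Real.sin (θ / 2) * Real.cos (θ / 2) - (1 - 2 * Real.sin (θ / 2) ^ 2)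
      = 2 * Real.sin (θ / 2) * (Real.cos (θ / 2) + Real.sin (θ / 2)) by ring]
  field_simp
lemma tan_pos_half (θ : ℝ) (h1 : 0 < θ) (h2 : θ ≤ π / 4) : 0 < Real.tan (θ / 2) := by
  apply Real.tan_pos_of_pos_of_lt_pi_div_two (by linarith)
  nlinarith [Real.pi_pos]

theorem stmt_10 :
    StrictAntiOn (fun θ : ℝ => sin θ / (1 + sin θ - cos θ)) (Ioc 0 (π / 4)) := by
  intro x hx y hy hxy
  obtain ⟨hx1, hx2⟩ := hx
  obtain ⟨hy1, hy2⟩ := hy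
  simp only
  rw [key_eq x hx1 hx2, key_eq y hy1 hy2]
  have hx' := tan_pos_half x hx1 hx2
  have hy' := tan_pos_half y hy1 hy2
  have htan : Real.tan (x / 2) < Real.tan (y / 2) := by
    apply Real.tan_lt_tan_of_nonneg_of_lt_pi_div_two (by linarith) (by linarith)
    nlinarith [Real.pi_pos]
  apply one_div_lt_one_div_of_lt <;> linarith
end

section
/- The function φ(θ) = sin θ / (1 + sin θ − cos θ) satisfies lim_{θ→0⁺} φ(θ) = 1 and φ(π/4) = 1/√2. Consequently the map θ ↦ arccos(φ(θ)) is a bijection from (0, π/4] onto (0, π/4]. -/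
open Real Set Filter

-- denominator positive
lemma hd_pos {θ : ℝ} (h1 : 0 < θ) (h2 : θ < π) : 0 < 1 + sin θ - cos θ := by
  have hs : 0 < sin θ := Real.sin_pos_of_pos_of_lt_pi h1 h2
  have hc : cos θ ≤ 1 := Real.cos_le_one θ
  linarith

-- key inequality: φ θ ≥ √2/2 on (0, π/4]
lemma key_ge {θ : ℝ} (h1 : 0 < θ) (h2 : θ ≤ π/4) :
    Real.sqrt 2 / 2 ≤ sin θ / (1 + sin θ - cos θ) := by
  have hpi : θ < π := lt_of_le_of_lt h2 (by linarith [Real.pi_pos])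
  have hd := hd_pos h1 hpi
  have hs : 0 < sin θ := Real.sin_pos_of_pos_of_lt_pi h1 hpi
  have hab : sin θ ≤ cos θ := by
    have h3 : sin θ ≤ sin (π/4) := by
      rcases eq_or_lt_of_le h2 with h | h
      · rw [h]
      · exact le_of_lt (Real.sin_lt_sin_of_lt_of_le_pi_div_two (by linarith [Real.pi_pos]) (by linarith [Real.pi_pos]) h)
    have h4 : cos (π/4) ≤ cos θ := by
      rcases eq_or_lt_of_le h2 with h | h
      · rw [h]
      · exact le_of_lt (Real.cos_lt_cos_of_nonneg_of_le_pi h1.le (by linarith [Real.pi_pos]) h)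
    rw [Real.sin_pi_div_four] at h3
    rw [Real.cos_pi_div_four] at h4
    linarith
  have hsq : Real.sqrt 2 ^ 2 = 2 := Real.sq_sqrt (by norm_num)
  have h2lt : (1:ℝ) < Real.sqrt 2 := by nlinarith [Real.sqrt_nonneg 2]
  have hpyth : sin θ ^ 2 + cos θ ^ 2 = 1 := Real.sin_sq_add_cos_sq θ
  rw [div_le_div_iff₀ (by norm_num) hd]
  have e1 : ((Real.sqrt 2 - 1) * sin θ + cos θ)^2 - 1
      = 2*(Real.sqrt 2 - 1)*(sin θ)*(cos θ - sin θ) := by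
    linear_combination (sin θ)^2 * hsq + hpyth
  have hpos : 0 < (Real.sqrt 2 - 1) * sin θ + cos θ := by nlinarith
  have hge : 1 ≤ (Real.sqrt 2 - 1) * sin θ + cos θ := by
    nlinarith [mul_nonneg (mul_nonneg (by linarith : (0:ℝ) ≤ 2*(Real.sqrt 2 - 1)) hs.le)
      (sub_nonneg.2 hab)]
  nlinarith [mul_le_mul_of_nonneg_left hge (Real.sqrt_nonneg 2)]

-- φ θ < 1 on (0, π)
lemma key_lt {θ : ℝ} (h1 : 0 < θ) (h2 : θ < π) : sin θ / (1 + sin θ - cos θ) < 1 := by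
  have hd := hd_pos h1 h2
  have hc : cos θ < 1 := by
    have := Real.cos_lt_cos_of_nonneg_of_le_pi (le_refl 0) h2.le h1
    simpa using this
  rw [div_lt_one hd]; linarith

-- strict antitonicity of φ on (0, π/4]
lemma phi_anti {θ₁ θ₂ : ℝ} (h1 : 0 < θ₁) (h12 : θ₁ < θ₂) (h2 : θ₂ ≤ π/4) :
    sin θ₂ / (1 + sin θ₂ - cos θ₂) < sin θ₁ / (1 + sin θ₁ - cos θ₁) := by
  have hpi2 : θ₂ < π := lt_of_le_of_lt h2 (by linarith [Real.pi_pos])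
  have hd1 := hd_pos h1 (h12.trans hpi2)
  have hd2 := hd_pos (h1.trans h12) hpi2
  rw [div_lt_div_iff₀ hd2 hd1]
  have key : sin θ₂ - sin θ₁ < sin (θ₂ - θ₁) := by
    rw [Real.sin_sub_sin]
    have h3 : sin (θ₂ - θ₁) = 2 * sin ((θ₂ - θ₁)/2) * cos ((θ₂ - θ₁)/2) := by
      rw [← Real.sin_two_mul]; ring_nf
    rw [h3]
    have hs : 0 < sin ((θ₂ - θ₁)/2) :=
      Real.sin_pos_of_pos_of_lt_pi (by linarith) (by linarith [Real.pi_pos])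
    have hcc : cos ((θ₂ + θ₁)/2) < cos ((θ₂ - θ₁)/2) :=
      Real.cos_lt_cos_of_nonneg_of_le_pi (by linarith) (by linarith [Real.pi_pos]) (by linarith)
    nlinarith
  have hexp : sin (θ₂ - θ₁) = sin θ₂ * cos θ₁ - cos θ₂ * sin θ₁ := Real.sin_sub θ₂ θ₁
  nlinarith

theorem stmt_11 :
    Tendsto (fun θ : ℝ => sin θ / (1 + sin θ - cos θ)) (nhdsWithin 0 (Ioi 0)) (nhds 1) ∧
    sin (π / 4) / (1 + sin (π / 4) - cos (π / 4)) = 1 / Real.sqrt 2 ∧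
    BijOn (fun θ : ℝ => arccos (sin θ / (1 + sin θ - cos θ))) (Ioc 0 (π / 4)) (Ioc 0 (π / 4)) := by
  have hpi := Real.pi_pos
  have hpi4 : π / 4 < π := by linarith
  -- Part 1
  have part1 : Tendsto (fun θ : ℝ => sin θ / (1 + sin θ - cos θ)) (nhdsWithin 0 (Ioi 0)) (nhds 1) := by
    set g : ℝ → ℝ := fun θ => cos (θ/2) / (sin (θ/2) + cos (θ/2)) with hg_def
    have hcongr : g =ᶠ[nhdsWithin (0:ℝ) (Ioi 0)] (fun θ : ℝ => sin θ / (1 + sin θ - cos θ)) := by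
      filter_upwards [Ioo_mem_nhdsGT hpi] with θ hθ
      obtain ⟨h1, h2⟩ := hθ
      have hsin : sin θ = 2 * sin (θ/2) * cos (θ/2) := by
        rw [← Real.sin_two_mul]; ring_nf
      have hcos : cos θ = 1 - 2 * sin (θ/2)^2 := by
        have h := Real.cos_two_mul (θ/2)
        have h2' := Real.sin_sq_add_cos_sq (θ/2)
        rw [show 2*(θ/2) = θ by ring] at h
        linarith
      have hs : 0 < sin (θ/2) := Real.sin_pos_of_pos_of_lt_pi (by linarith) (by linarith)
      simp only [hg_def]
      rw [hsin, hcos,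
        show (2 * sin (θ/2) * cos (θ/2)) = (2 * sin (θ/2)) * cos (θ/2) by ring,
        show (1 + 2 * sin (θ/2) * cos (θ/2) - (1 - 2 * sin (θ/2)^2))
          = (2 * sin (θ/2)) * (sin (θ/2) + cos (θ/2)) by ring,
        mul_div_mul_left _ _ (by positivity : (2:ℝ) * sin (θ/2) ≠ 0)]
    have hcont : ContinuousAt g 0 := by
      apply ContinuousAt.div
      · fun_prop
      · fun_prop
      · norm_num
    have hg0 : g 0 = 1 := by simp [hg_def]
    have := hcont.tendsto
    rw [hg0] at this
    exact Tendsto.congr' hcongr (this.mono_left nhdsWithin_le_nhds)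
  -- Part 2
  have part2 : sin (π / 4) / (1 + sin (π / 4) - cos (π / 4)) = 1 / Real.sqrt 2 := by
    rw [Real.sin_pi_div_four, Real.cos_pi_div_four]
    have h2 : Real.sqrt 2 * Real.sqrt 2 = 2 := Real.mul_self_sqrt (by norm_num)
    have hne : Real.sqrt 2 ≠ 0 := by positivity
    field_simp
    nlinarith [h2]
  refine ⟨part1, part2, ?_⟩
  -- Part 3
  have hfpi4 : arccos (sin (π/4) / (1 + sin (π/4) - cos (π/4))) = π/4 := by
    rw [part2, show (1:ℝ) / Real.sqrt 2 = cos (π/4) by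
      rw [Real.cos_pi_div_four]
      have h2 : Real.sqrt 2 * Real.sqrt 2 = 2 := Real.mul_self_sqrt (by norm_num)
      have hne : Real.sqrt 2 ≠ 0 := by positivity
      field_simp; nlinarith [h2]]
    exact Real.arccos_cos (by linarith) (by linarith)
  constructor
  · -- MapsTo
    intro θ ⟨h1, h2⟩
    exact ⟨Real.arccos_pos.2 (key_lt h1 (lt_of_le_of_lt h2 hpi4)),
      Real.arccos_le_pi_div_four.2 (key_ge h1 h2)⟩
  constructor
  · -- InjOn
    intro θ₁ ⟨ha1, ha2⟩ θ₂ ⟨hb1, hb2⟩ heq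
    simp only at heq
    by_contra hne
    have memphi : ∀ θ : ℝ, 0 < θ → θ ≤ π/4 →
        sin θ / (1 + sin θ - cos θ) ∈ Icc (-1 : ℝ) 1 := by
      intro θ h1 h2
      have := key_ge h1 h2
      have := key_lt h1 (lt_of_le_of_lt h2 hpi4)
      constructor
      · nlinarith [Real.sqrt_nonneg 2]
      · linarith
    rcases lt_or_gt_of_ne hne with h | h
    · have := Real.strictAntiOn_arccos (memphi θ₂ hb1 hb2) (memphi θ₁ ha1 ha2)
        (phi_anti ha1 h hb2)
      linarith
    · have := Real.strictAntiOn_arccos (memphi θ₁ ha1 ha2) (memphi θ₂ hb1 hb2)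
        (phi_anti hb1 h ha2)
      linarith
  · -- SurjOn
    intro y ⟨hy1, hy2⟩
    have htend : Tendsto (fun θ : ℝ => arccos (sin θ / (1 + sin θ - cos θ)))
        (nhdsWithin 0 (Ioi 0)) (nhds 0) := by
      have := (Real.continuous_arccos.tendsto 1).comp part1
      simpa [Function.comp_def, Real.arccos_one] using this
    have hev : ∀ᶠ θ in nhdsWithin (0:ℝ) (Ioi 0),
        arccos (sin θ / (1 + sin θ - cos θ)) < y := htend.eventually_lt_const hy1
    have hmem : Ioo (0:ℝ) (π/4) ∈ nhdsWithin (0:ℝ) (Ioi 0) :=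
      Ioo_mem_nhdsGT (by linarith)
    obtain ⟨θ₀, h₀f, h₀1, h₀2⟩ := (hev.and (eventually_of_mem hmem fun x hx => hx)).exists
    have hcontf : ContinuousOn (fun θ : ℝ => arccos (sin θ / (1 + sin θ - cos θ)))
        (Icc θ₀ (π/4)) := by
      apply Real.continuous_arccos.comp_continuousOn
      apply ContinuousOn.div (by fun_prop) (by fun_prop)
      intro x hx
      exact ne_of_gt (hd_pos (lt_of_lt_of_le h₀1 hx.1) (lt_of_le_of_lt hx.2 hpi4))
    have hivt := intermediate_value_Icc (le_of_lt h₀2) hcontf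
    have hy_mem : y ∈ Icc (arccos (sin θ₀ / (1 + sin θ₀ - cos θ₀)))
        (arccos (sin (π/4) / (1 + sin (π/4) - cos (π/4)))) := by
      rw [hfpi4]; exact ⟨h₀f.le, hy2⟩
    obtain ⟨x, hx, hfx⟩ := hivt hy_mem
    exact ⟨x, ⟨lt_of_lt_of_le h₀1 hx.1, hx.2⟩, hfx⟩
end

section
/- Let θ ∈ (0, π/4], t_θ = arccos(sin θ/(1 + sin θ − cos θ)), d_θ = cos t_θ (1 − cos θ), and y_θ = (−sin t_θ sin θ, −cos t_θ sin θ, cos t_θ cos θ). Then cos t_θ (1 − cos θ) = sin θ (1 − cos t_θ), and moreover for γ₂(t) = (0, cos t − 1, −sin t) and γ₄(t) = (cos t − 1, sin t, 0) one has ⟨γ₂(t), y_θ⟩ ≤ 0 < d_θ and ⟨γ₄(t), y_θ⟩ ≤ 0 < d_θ for all t ∈ [0, π/4]. -/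
open Real Set RealInnerProductSpace

noncomputable def vec3 (a b c : ℝ) : EuclideanSpace ℝ (Fin 3) :=
  (WithLp.equiv 2 (Fin 3 → ℝ)).symm ![a, b, c]

noncomputable def γ₁ (t : ℝ) : EuclideanSpace ℝ (Fin 3) := vec3 0 (-sin t) (cos t - 1)
noncomputable def γ₂ (t : ℝ) : EuclideanSpace ℝ (Fin 3) := vec3 0 (cos t - 1) (-sin t)
noncomputable def γ₃ (t : ℝ) : EuclideanSpace ℝ (Fin 3) := vec3 (-sin t) (1 - cos t) 0
noncomputable def γ₄ (t : ℝ) : EuclideanSpace ℝ (Fin 3) := vec3 (cos t - 1) (sin t) 0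

noncomputable def tθ (θ : ℝ) : ℝ := arccos (sin θ / (1 + sin θ - cos θ))

noncomputable def yθ (θ : ℝ) : EuclideanSpace ℝ (Fin 3) :=
  vec3 (-(sin (tθ θ) * sin θ)) (-(cos (tθ θ) * sin θ)) (cos (tθ θ) * cos θ)

noncomputable def dθ (θ : ℝ) : ℝ := cos (tθ θ) * (1 - cos θ)

set_option maxHeartbeats 800000 in
theorem stmt_15 (θ : ℝ) (hθ : θ ∈ Ioc (0 : ℝ) (π / 4)) :
    cos (tθ θ) * (1 - cos θ) = sin θ * (1 - cos (tθ θ)) ∧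
    ∀ t ∈ Icc (0 : ℝ) (π / 4),
      (⟪γ₂ t, yθ θ⟫ ≤ 0 ∧ 0 < dθ θ) ∧ (⟪γ₄ t, yθ θ⟫ ≤ 0 ∧ 0 < dθ θ) := by
  obtain ⟨h0, h4⟩ := hθ
  have hpi : (0:ℝ) < π := pi_pos
  have hr : (√2) ^ 2 = 2 := Real.sq_sqrt (by norm_num)
  have hrpos : (0:ℝ) < √2 := Real.sqrt_pos.mpr (by norm_num)
  have hs : 0 < sin θ := sin_pos_of_pos_of_lt_pi h0 (by linarith)
  have hsle : sin θ ≤ √2 / 2 := by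
    have := sin_le_sin_of_le_of_le_pi_div_two (by linarith) (by linarith) h4
    rwa [sin_pi_div_four] at this
  have hcge : √2 / 2 ≤ cos θ := by
    have := cos_le_cos_of_nonneg_of_le_pi (le_of_lt h0) (by linarith) h4
    rwa [cos_pi_div_four] at this
  have hc1 : cos θ < 1 := by
    have := cos_lt_cos_of_nonneg_of_le_pi (le_refl 0) (by linarith) h0
    rwa [cos_zero] at this
  have hD : 0 < 1 + sin θ - cos θ := by linarith
  set x : ℝ := sin θ / (1 + sin θ - cos θ) with hxdef
  have hsq : sin θ ^ 2 + cos θ ^ 2 = 1 := sin_sq_add_cos_sq θ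
  have hx0 : 0 < x := div_pos hs hD
  have hx1 : x ≤ 1 := by rw [div_le_one hD]; linarith
  have hcpos : (0:ℝ) < 1 + cos θ := by nlinarith
  have hA : (1:ℝ) ≤ (2 - √2) * (1 + cos θ) := by nlinarith
  have hB : √2 * sin θ ^ 2 ≤ sin θ := by nlinarith
  have hkey0 : √2 * (1 - cos θ) ≤ (2 - √2) * sin θ := by
    nlinarith [mul_le_mul_of_nonneg_right hA hs.le]
  have hxl : √2 / 2 ≤ x := by
    rw [le_div_iff₀ hD]; nlinarith
  have hcos : cos (tθ θ) = x := cos_arccos (by linarith) hx1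
  have hsin : sin (tθ θ) = √(1 - x ^ 2) := sin_arccos x
  have hsc : sin (tθ θ) ≤ cos (tθ θ) := by
    rw [hsin, hcos]
    calc √(1 - x ^ 2) ≤ √(x ^ 2) := by
          apply Real.sqrt_le_sqrt; nlinarith
      _ = x := by rw [Real.sqrt_sq hx0.le]
  have hsn : 0 ≤ sin (tθ θ) := by rw [hsin]; exact Real.sqrt_nonneg _
  have hd : 0 < dθ θ := by
    rw [dθ, hcos]; nlinarith
  refine ⟨by rw [hcos]; linear_combination div_mul_cancel₀ (sin θ) hD.ne', ?_⟩
  intro t ⟨ht0, ht4⟩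
  have hst : 0 ≤ sin t := sin_nonneg_of_nonneg_of_le_pi ht0 (by linarith)
  have hct : √2 / 2 ≤ cos t := by
    have := cos_le_cos_of_nonneg_of_le_pi ht0 (by linarith) ht4
    rwa [cos_pi_div_four] at this
  have hsqt : sin t ^ 2 + cos t ^ 2 = 1 := sin_sq_add_cos_sq t
  have hkey : 1 - cos t ≤ sin t := by nlinarith
  have hi2 : ⟪γ₂ t, yθ θ⟫ ≤ 0 := by
    have h1 : sin θ * (1 - cos t) ≤ cos θ * sin t := by nlinarith
    have h2' : 0 ≤ cos (tθ θ) * (cos θ * sin t - sin θ * (1 - cos t)) := by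
      apply mul_nonneg (by rw [hcos]; linarith); linarith
    simp only [γ₂, yθ, vec3, PiLp.inner_apply, WithLp.equiv_symm_apply, WithLp.ofLp_toLp, PiLp.toLp_apply,
      Fin.sum_univ_three, Matrix.cons_val_zero, Matrix.cons_val_one, Matrix.head_cons,
      Matrix.cons_val_two, Matrix.tail_cons, RCLike.inner_apply, conj_trivial]
    nlinarith [h2']
  have hi4 : ⟪γ₄ t, yθ θ⟫ ≤ 0 := by
    have h1 : sin (tθ θ) * (1 - cos t) ≤ cos (tθ θ) * sin t := by nlinarith
    have h2' : 0 ≤ sin θ * (cos (tθ θ) * sin t - sin (tθ θ) * (1 - cos t)) := by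
      apply mul_nonneg hs.le; linarith
    simp only [γ₄, yθ, vec3, PiLp.inner_apply, WithLp.equiv_symm_apply, WithLp.ofLp_toLp, PiLp.toLp_apply,
      Fin.sum_univ_three, Matrix.cons_val_zero, Matrix.cons_val_one, Matrix.head_cons,
      Matrix.cons_val_two, Matrix.tail_cons, RCLike.inner_apply, conj_trivial]
    nlinarith [h2']
  exact ⟨⟨hi2, hd⟩, ⟨hi4, hd⟩⟩
end

section
/- For each θ ∈ (0, π/4], the line segment co{γ₁(θ), γ₃(t_θ)} is an exposed face of the convex set C = co(γ₁ ∪ γ₂ ∪ γ₃ ∪ γ₄), where it is exposed by the linear functional y_θ at value d_θ: that is, ⟨x, y_θ⟩ ≤ d_θ for all x ∈ C, with equality exactly on co{γ₁(θ), γ₃(t_θ)}. -/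
open Real Set RealInnerProductSpace

lemma inner_vec3 (a b c a' b' c' : ℝ) :
    ⟪vec3 a b c, vec3 a' b' c'⟫ = a * a' + b * b' + c * c' := by
  simp [vec3, PiLp.inner_apply, Fin.sum_univ_three]; ring

lemma face_hull {E : Type*} [AddCommGroup E] [Module ℝ E] (f : E →ₗ[ℝ] ℝ) (s : Set E) (d : ℝ)
    (hs : ∀ z ∈ s, f z ≤ d) {x : E} (hx : x ∈ convexHull ℝ s) (hfx : f x = d) :
    x ∈ convexHull ℝ (s ∩ {z | f z = d}) := by
  rw [convexHull_eq] at hx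
  obtain ⟨ι, t, w, z, hw0, hw1, hzs, hcm⟩ := hx
  have hmass : t.centerMass w z = ∑ i ∈ t, w i • z i :=
    Finset.centerMass_eq_of_sum_1 _ _ hw1
  have hfsum : ∑ i ∈ t, w i * f (z i) = d := by
    rw [← hfx, ← hcm, hmass, map_sum]
    simp [smul_eq_mul]
  have hzero : ∀ i ∈ t, w i * (d - f (z i)) = 0 := by
    rw [← Finset.sum_eq_zero_iff_of_nonneg]
    · have : ∑ i ∈ t, w i * (d - f (z i)) = (∑ i ∈ t, w i) * d - ∑ i ∈ t, w i * f (z i) := by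
        rw [Finset.sum_mul, ← Finset.sum_sub_distrib]
        exact Finset.sum_congr rfl fun i _ => by ring
      rw [this, hw1, hfsum]; ring
    · intro i hi
      exact mul_nonneg (hw0 i hi) (by linarith [hs (z i) (hzs i hi)])
  have key : ({i ∈ t | w i ≠ 0} : Finset ι).centerMass w z ∈
      convexHull ℝ (s ∩ {z | f z = d}) := by
    apply Finset.centerMass_mem_convexHull
    · intro i hi
      exact hw0 i (Finset.mem_filter.mp hi).1
    · rw [Finset.sum_filter_ne_zero, hw1]; norm_num
    · intro i hi
      obtain ⟨hit, hwne⟩ := Finset.mem_filter.mp hi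
      refine ⟨hzs i hit, ?_⟩
      have := hzero i hit
      rcases mul_eq_zero.mp this with h | h
      · exact absurd h hwne
      · simpa using (by linarith : f (z i) = d)
  rwa [Finset.centerMass_filter_ne_zero, hcm] at key

set_option maxHeartbeats 1000000 in
theorem stmt_16 (θ : ℝ) (hθ : θ ∈ Ioc (0 : ℝ) (π / 4)) :
    (∀ x ∈ convexHull ℝ (γ₁ '' Icc (0 : ℝ) (π / 4) ∪ γ₂ '' Icc (0 : ℝ) (π / 4) ∪
        γ₃ '' Icc (0 : ℝ) (π / 4) ∪ γ₄ '' Icc (0 : ℝ) (π / 4)), ⟪x, yθ θ⟫ ≤ dθ θ) ∧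
    {x ∈ convexHull ℝ (γ₁ '' Icc (0 : ℝ) (π / 4) ∪ γ₂ '' Icc (0 : ℝ) (π / 4) ∪
        γ₃ '' Icc (0 : ℝ) (π / 4) ∪ γ₄ '' Icc (0 : ℝ) (π / 4)) | ⟪x, yθ θ⟫ = dθ θ} =
      segment ℝ (γ₁ θ) (γ₃ (tθ θ)) := by
  obtain ⟨hθ0, hθ4⟩ := hθ
  have hπ : (0:ℝ) < π := Real.pi_pos
  have hπ4 : π / 4 ≤ π / 2 := by linarith
  set s := sin θ with hs_def
  set c := cos θ with hc_def
  have hθπ : θ < π := by linarith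
  have hs0 : 0 < s := Real.sin_pos_of_pos_of_lt_pi hθ0 hθπ
  have hc1 : c < 1 := by
    have : c < cos 0 := Real.strictAntiOn_cos ⟨le_refl 0, hπ.le⟩ ⟨hθ0.le, hθπ.le⟩ hθ0
    simpa using this
  have hc0 : 0 < c := Real.cos_pos_of_mem_Ioo ⟨by linarith, by linarith⟩
  have hpyth : s ^ 2 + c ^ 2 = 1 := by
    rw [hs_def, hc_def]; exact Real.sin_sq_add_cos_sq θ
  have hsc : s ≤ c := by
    rw [hs_def, hc_def, ← Real.cos_pi_div_two_sub]
    exact Real.cos_le_cos_of_nonneg_of_le_pi (by linarith) (by linarith) (by linarith)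
  have hD : 0 < 1 + s - c := by linarith
  set r := s / (1 + s - c) with hr_def
  have hr0 : 0 < r := div_pos hs0 hD
  have hr1 : r < 1 := (div_lt_one hD).mpr (by linarith)
  set T := tθ θ with hT_def
  have hctr : cos T = r := Real.cos_arccos (by linarith) hr1.le
  have hT0 : 0 < T := Real.arccos_pos.mpr hr1
  have hT2 : T < π / 2 := Real.arccos_lt_pi_div_two.mpr hr0
  have hst0 : 0 < sin T := Real.sin_pos_of_pos_of_lt_pi hT0 (by linarith)
  have hct0 : 0 < cos T := by rw [hctr]; exact hr0
  -- c ≥ √2/2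
  have hsqrt2 : Real.sqrt 2 ^ 2 = 2 := Real.sq_sqrt (by norm_num)
  have hsqrt2' : (1:ℝ) < Real.sqrt 2 := by nlinarith [Real.sqrt_nonneg 2]
  have hc22 : 1 ≤ 2 * c ^ 2 := by nlinarith
  -- (√2 - 1) * s ≥ 1 - c
  have hcs : Real.sqrt 2 ≤ 2 * c := by nlinarith
  have hkey : 1 - c ≤ (Real.sqrt 2 - 1) * s := by
    have h1 : 0 ≤ (1 - c) * ((2 - Real.sqrt 2) * (2 * c - Real.sqrt 2)) := by
      apply mul_nonneg (by linarith)
      apply mul_nonneg (by nlinarith) (by linarith)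
    nlinarith [h1, mul_pos hs0 (by linarith : (0:ℝ) < Real.sqrt 2 - 1), sq_nonneg s]
  have hr22 : Real.sqrt 2 / 2 ≤ r := by
    rw [hr_def, le_div_iff₀ hD]
    nlinarith
  have hT4 : T ≤ π / 4 := by
    by_contra h
    push_neg at h
    have : cos T < cos (π / 4) :=
      Real.strictAntiOn_cos ⟨by linarith, by linarith⟩ ⟨by linarith, by linarith⟩ h
    rw [Real.cos_pi_div_four, hctr] at this
    linarith
  have hctD : cos T * (1 + s - c) = s := by
    rw [hctr, hr_def]; field_simp
  have hd_eq : dθ θ = cos T * (1 - c) := rfl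
  have hd0 : 0 < dθ θ := by
    rw [hd_eq]; exact mul_pos hct0 (by linarith)
  have hd_alt : dθ θ = s * (1 - cos T) := by
    rw [hd_eq]; linear_combination hctD
  -- inner products
  have hip1 : ∀ u : ℝ, ⟪γ₁ u, yθ θ⟫ = cos T * (cos (u - θ) - c) := by
    intro u
    rw [γ₁, yθ, inner_vec3, Real.cos_sub]
    rw [← hT_def, ← hs_def, ← hc_def]; ring
  have hip2 : ∀ u : ℝ, ⟪γ₂ u, yθ θ⟫ = -(cos T * (sin (u + θ) - s)) := by
    intro u
    rw [γ₂, yθ, inner_vec3, Real.sin_add]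
    rw [← hT_def, ← hs_def, ← hc_def]; ring
  have hip3 : ∀ u : ℝ, ⟪γ₃ u, yθ θ⟫ = s * (cos (u - T) - cos T) := by
    intro u
    rw [γ₃, yθ, inner_vec3, Real.cos_sub]
    rw [← hT_def, ← hs_def, ← hc_def]; ring
  have hip4 : ∀ u : ℝ, ⟪γ₄ u, yθ θ⟫ = -(s * (sin (u + T) - sin T)) := by
    intro u
    rw [γ₄, yθ, inner_vec3, Real.sin_add]
    rw [← hT_def, ← hs_def, ← hc_def]; ring
  -- bounds on the generating set
  set S : Set (EuclideanSpace ℝ (Fin 3)) :=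
    γ₁ '' Icc (0 : ℝ) (π / 4) ∪ γ₂ '' Icc (0 : ℝ) (π / 4) ∪
      γ₃ '' Icc (0 : ℝ) (π / 4) ∪ γ₄ '' Icc (0 : ℝ) (π / 4) with hS_def
  have hbound : ∀ z ∈ S, ⟪z, yθ θ⟫ ≤ dθ θ := by
    rintro z (((⟨u, hu, rfl⟩ | ⟨u, hu, rfl⟩) | ⟨u, hu, rfl⟩) | ⟨u, hu, rfl⟩)
    · rw [hip1, hd_eq]
      have : cos (u - θ) ≤ 1 := Real.cos_le_one _
      nlinarith
    · rw [hip2]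
      have : s ≤ sin (u + θ) := by
        rw [hs_def]
        exact Real.sin_le_sin_of_le_of_le_pi_div_two (by linarith)
          (by obtain ⟨h1, h2⟩ := hu; linarith) (by obtain ⟨h1, h2⟩ := hu; linarith)
      nlinarith
    · rw [hip3, hd_alt]
      have : cos (u - T) ≤ 1 := Real.cos_le_one _
      nlinarith
    · rw [hip4]
      have : sin T ≤ sin (u + T) := by
        exact Real.sin_le_sin_of_le_of_le_pi_div_two (by linarith)
          (by obtain ⟨h1, h2⟩ := hu; linarith) (by obtain ⟨h1, h2⟩ := hu; linarith)
      nlinarith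
  -- equality points
  have heqpts : ∀ z ∈ S, ⟪z, yθ θ⟫ = dθ θ → z = γ₁ θ ∨ z = γ₃ T := by
    rintro z (((⟨u, hu, rfl⟩ | ⟨u, hu, rfl⟩) | ⟨u, hu, rfl⟩) | ⟨u, hu, rfl⟩) heq
    · left
      rw [hip1, hd_eq] at heq
      have hcos1 : cos (u - θ) = 1 := by
        have h1 : cos (u - θ) ≤ 1 := Real.cos_le_one _
        nlinarith
      have : u - θ = 0 := by
        rw [Real.cos_eq_one_iff_of_lt_of_lt (by obtain ⟨h1, h2⟩ := hu; linarith)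
          (by obtain ⟨h1, h2⟩ := hu; linarith)] at hcos1
        exact hcos1
      have : u = θ := by linarith
      rw [this]
    · exfalso
      rw [hip2] at heq
      have : s ≤ sin (u + θ) := by
        rw [hs_def]
        exact Real.sin_le_sin_of_le_of_le_pi_div_two (by linarith)
          (by obtain ⟨h1, h2⟩ := hu; linarith) (by obtain ⟨h1, h2⟩ := hu; linarith)
      nlinarith
    · right
      rw [hip3, hd_alt] at heq
      have hcos1 : cos (u - T) = 1 := by
        have h1 : cos (u - T) ≤ 1 := Real.cos_le_one _
        nlinarith
      have : u - T = 0 := by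
        rw [Real.cos_eq_one_iff_of_lt_of_lt (by obtain ⟨h1, h2⟩ := hu; linarith)
          (by obtain ⟨h1, h2⟩ := hu; linarith)] at hcos1
        exact hcos1
      have : u = T := by linarith
      rw [this]
    · exfalso
      rw [hip4] at heq
      have : sin T ≤ sin (u + T) := by
        exact Real.sin_le_sin_of_le_of_le_pi_div_two (by linarith)
          (by obtain ⟨h1, h2⟩ := hu; linarith) (by obtain ⟨h1, h2⟩ := hu; linarith)
      nlinarith
  -- the linear functional
  set f : EuclideanSpace ℝ (Fin 3) →ₗ[ℝ] ℝ :=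
    ((innerSL ℝ (yθ θ)).toLinearMap) with hf_def
  have hf_apply : ∀ x, f x = ⟪x, yθ θ⟫ := by
    intro x
    simp only [hf_def, ContinuousLinearMap.coe_coe, innerSL_apply_apply]
    exact real_inner_comm _ _
  -- memberships and values at the two endpoints
  have hmem1 : γ₁ θ ∈ S := by
    rw [hS_def]
    exact Or.inl (Or.inl (Or.inl ⟨θ, ⟨hθ0.le, hθ4⟩, rfl⟩))
  have hmem3 : γ₃ T ∈ S := by
    rw [hS_def]
    exact Or.inl (Or.inr ⟨T, ⟨hT0.le, hT4⟩, rfl⟩)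
  have hval1 : ⟪γ₁ θ, yθ θ⟫ = dθ θ := by
    rw [hip1, hd_eq]; simp
  have hval3 : ⟪γ₃ T, yθ θ⟫ = dθ θ := by
    rw [hip3, hd_alt]; simp
  have hCbd : ∀ x ∈ convexHull ℝ S, ⟪x, yθ θ⟫ ≤ dθ θ := by
    intro x hx
    have : f x ≤ dθ θ := by
      have hsub : convexHull ℝ S ⊆ {x | f x ≤ dθ θ} := by
        apply convexHull_min
        · intro z hz
          simp only [mem_setOf_eq]
          rw [hf_apply]; exact hbound z hz
        · intro a ha b hb p q hp hq hpq
          simp only [mem_setOf_eq, map_add, map_smul, smul_eq_mul] at *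
          nlinarith
      exact hsub hx
    rwa [hf_apply] at this
  refine ⟨hCbd, ?_⟩
  ext x
  simp only [mem_setOf_eq]
  constructor
  · rintro ⟨hxC, hxe⟩
    have hx' : x ∈ convexHull ℝ (S ∩ {z | f z = dθ θ}) := by
      apply face_hull f S (dθ θ)
      · intro z hz; rw [hf_apply]; exact hbound z hz
      · exact hxC
      · rw [hf_apply]; exact hxe
    have hsub : S ∩ {z | f z = dθ θ} ⊆ {γ₁ θ, γ₃ T} := by
      rintro z ⟨hzS, hzf⟩
      rw [mem_setOf_eq, hf_apply] at hzf
      rcases heqpts z hzS hzf with h | h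
      · exact Or.inl h
      · exact Or.inr h
    have := convexHull_mono hsub hx'
    rwa [convexHull_pair] at this
  · intro hx
    constructor
    · have : segment ℝ (γ₁ θ) (γ₃ T) ⊆ convexHull ℝ S := by
        rw [← convexHull_pair]
        apply convexHull_mono
        rintro z (rfl | rfl)
        · exact hmem1
        · exact hmem3
      exact this hx
    · obtain ⟨a, b, ha, hb, hab, rfl⟩ := hx
      rw [inner_add_left, real_inner_smul_left, real_inner_smul_left, hval1, hval3]
      linear_combination hab * dθ θ
end

section
/- Let F = cone({1} × (2·co(γ₃ ∪ γ₄) + c)) ⊆ ℝ⁴ with c = (1/2, 0, 1/2), γ₃(t) = (−sin t, 1 − cos t, 0), γ₄(t) = (cos t − 1, sin t, 0), t ∈ [0, π/4]. Then the orthogonal complement of span F in ℝ⁴ equals span{(1, 0, 0, −2)}. -/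
open Real Pointwise RealInnerProductSpace

/-- The conic hull: all nonnegative multiples of elements of `S`. -/
def coneHull {E : Type*} [AddCommMonoid E] [Module ℝ E] (S : Set E) : Set E :=
  {y | ∃ c : ℝ, 0 ≤ c ∧ ∃ x ∈ S, y = c • x}

noncomputable def vec4 (a b c d : ℝ) : EuclideanSpace ℝ (Fin 4) :=
  (WithLp.equiv 2 (Fin 4 → ℝ)).symm ![a, b, c, d]

/-- The point `(1, x) ∈ ℝ⁴` for `x ∈ ℝ³`. -/
noncomputable def liftPt (x : EuclideanSpace ℝ (Fin 3)) : EuclideanSpace ℝ (Fin 4) :=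
  (WithLp.equiv 2 (Fin 4 → ℝ)).symm (Fin.cons 1 x)

/-- The translation vector `c = (1/2, 0, 1/2)`. -/
noncomputable def cvec : EuclideanSpace ℝ (Fin 3) := vec3 (1 / 2) 0 (1 / 2)

/-- The face `F = cone({1} × (2 · co(γ₃ ∪ γ₄) + c)) ⊆ ℝ⁴`. -/
noncomputable def Fface : Set (EuclideanSpace ℝ (Fin 4)) :=
  coneHull {z | ∃ x ∈ (fun w => (2 : ℝ) • w + cvec) ''
    convexHull ℝ (γ₃ '' Set.Icc (0 : ℝ) (π / 4) ∪ γ₄ '' Set.Icc (0 : ℝ) (π / 4)),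
    z = liftPt x}

/-- The set `C' = 2 · co(γ₁ ∪ γ₂ ∪ γ₃ ∪ γ₄) + c ⊆ ℝ³`. -/
noncomputable def C' : Set (EuclideanSpace ℝ (Fin 3)) :=
  (fun w => (2 : ℝ) • w + cvec) ''
    convexHull ℝ (γ₁ '' Set.Icc (0 : ℝ) (π / 4) ∪ γ₂ '' Set.Icc (0 : ℝ) (π / 4) ∪
      γ₃ '' Set.Icc (0 : ℝ) (π / 4) ∪ γ₄ '' Set.Icc (0 : ℝ) (π / 4))

/-- The cone `K = cone({1} × C') ⊆ ℝ⁴`. -/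
noncomputable def Kcone : Set (EuclideanSpace ℝ (Fin 4)) :=
  coneHull {z | ∃ x ∈ C', z = liftPt x}

lemma vec4_apply (a b c d : ℝ) (i : Fin 4) : vec4 a b c d i = ![a,b,c,d] i := rfl

lemma inner4 (x v : EuclideanSpace ℝ (Fin 4)) :
    ⟪x, v⟫ = x 0 * v 0 + x 1 * v 1 + x 2 * v 2 + x 3 * v 3 := by
  simp [PiLp.inner_apply, Fin.sum_univ_four, RCLike.inner_apply]
  ring

lemma liftPt_eq (x : EuclideanSpace ℝ (Fin 3)) :
    liftPt x = vec4 1 (x 0) (x 1) (x 2) := by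
  ext i
  fin_cases i <;> rfl


lemma lift_comp (a b c : ℝ) :
    liftPt ((2:ℝ) • vec3 a b c + cvec) = vec4 1 (2*a+1/2) (2*b) (2*c+1/2) := by
  rw [liftPt_eq]
  congr 1 <;> simp [vec3, cvec] <;> ring

lemma mem3 (t : ℝ) (ht : t ∈ Set.Icc (0:ℝ) (π/4)) :
    liftPt ((2:ℝ) • γ₃ t + cvec) ∈ Fface :=
  ⟨1, zero_le_one, _, ⟨(2:ℝ) • γ₃ t + cvec,
    ⟨γ₃ t, subset_convexHull ℝ _ (Or.inl ⟨t, ht, rfl⟩), rfl⟩, rfl⟩, (one_smul ℝ _).symm⟩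

lemma mem4 (t : ℝ) (ht : t ∈ Set.Icc (0:ℝ) (π/4)) :
    liftPt ((2:ℝ) • γ₄ t + cvec) ∈ Fface :=
  ⟨1, zero_le_one, _, ⟨(2:ℝ) • γ₄ t + cvec,
    ⟨γ₄ t, subset_convexHull ℝ _ (Or.inr ⟨t, ht, rfl⟩), rfl⟩, rfl⟩, (one_smul ℝ _).symm⟩

theorem stmt_17 :
    (Submodule.span ℝ Fface)ᗮ = Submodule.span ℝ {vec4 1 0 0 (-2)} := by
  have hπ : (0:ℝ) ≤ π/4 := by positivity
  have h0 : (0:ℝ) ∈ Set.Icc (0:ℝ) (π/4) := ⟨le_refl _, hπ⟩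
  have h1 : (π/4 : ℝ) ∈ Set.Icc (0:ℝ) (π/4) := ⟨hπ, le_refl _⟩
  have s2 : Real.sqrt 2 ^ 2 = 2 := Real.sq_sqrt (by norm_num)
  have s2pos : (1:ℝ) < Real.sqrt 2 := by
    nlinarith [Real.sqrt_nonneg 2]
  ext v
  rw [Submodule.mem_orthogonal, Submodule.mem_span_singleton]
  constructor
  · intro h
    have e0 := h _ (Submodule.subset_span (mem3 0 h0))
    have e1 := h _ (Submodule.subset_span (mem3 (π/4) h1))
    have e2 := h _ (Submodule.subset_span (mem4 (π/4) h1))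
    simp only [γ₃, γ₄, lift_comp, Real.sin_zero, Real.cos_zero, Real.sin_pi_div_four,
      Real.cos_pi_div_four, inner4, vec4_apply, Matrix.cons_val] at e0 e1 e2
    norm_num at e0 e1 e2
    have hs : Real.sqrt 2 / 2 * 2 = Real.sqrt 2 := by ring
    have hv1 : v 1 = 0 := by nlinarith [e0, e1, e2]
    have hv2 : v 2 = 0 := by nlinarith [e0, e1, e2]
    have hv3 : v 3 = -2 * v 0 := by nlinarith [e0, e1, e2]
    refine ⟨v 0, ?_⟩
    ext i
    fin_cases i <;>
      simp [vec4_apply, hv1, hv2, hv3] <;> ring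
  · rintro ⟨a, rfl⟩ x hx
    induction hx using Submodule.span_induction with
    | mem x hx =>
        obtain ⟨c, hc, z, ⟨y, ⟨w, hw, rfl⟩, rfl⟩, rfl⟩ := hx
        have hw2 : w 2 = 0 := by
          have hconv : convexHull ℝ (γ₃ '' Set.Icc (0:ℝ) (π/4) ∪ γ₄ '' Set.Icc (0:ℝ) (π/4))
              ⊆ {p : EuclideanSpace ℝ (Fin 3) | p 2 = 0} := by
            apply convexHull_min
            · rintro p (⟨t, _, rfl⟩ | ⟨t, _, rfl⟩) <;> rfl
            · exact (LinearMap.ker ((EuclideanSpace.proj 2 :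
                EuclideanSpace ℝ (Fin 3) →L[ℝ] ℝ) : EuclideanSpace ℝ (Fin 3) →ₗ[ℝ] ℝ)
                  : Submodule ℝ (EuclideanSpace ℝ (Fin 3))).convex
          exact hconv hw
        have hy : liftPt ((2:ℝ) • w + cvec) =
            vec4 1 (2 * w 0 + 1/2) (2 * w 1) (2 * w 2 + 1/2) := by
          rw [liftPt_eq]
          congr 1 <;> simp [cvec, vec3] <;> ring
        rw [hy, inner_smul_left, inner_smul_right, inner4]
        simp [vec4_apply, hw2]
    | zero => simp
    | add x y _ _ hx hy => rw [inner_add_left, hx, hy]; ring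
    | smul c x _ hx => rw [inner_smul_left, hx]; ring
end

section
/- Let C = co(γ₁ ∪ γ₂ ∪ γ₃ ∪ γ₄) ⊆ ℝ³ with γ₁(t) = (0, −sin t, cos t − 1), γ₂(t) = (0, cos t − 1, −sin t), γ₃(t) = (−sin t, 1 − cos t, 0), γ₄(t) = (cos t − 1, sin t, 0), t ∈ [0, π/4]; let C' = 2C + (1/2, 0, 1/2), K = cone({1} × C') ⊆ ℝ⁴, F = cone({1} × (2·co(γ₃ ∪ γ₄) + (1/2, 0, 1/2))), and q = (−1, 0, −1, 2). Then q ∉ K° + F^⊥, where K° is the polar cone of K and F^⊥ = span{(1,0,0,−2)}. -/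
open Real Pointwise RealInnerProductSpace

lemma lift_vec3 (a b c : ℝ) : liftPt (vec3 a b c) = vec4 1 a b c := by
  ext i; fin_cases i <;> rfl

lemma inner_vec4 (a b c d w u y z : ℝ) :
    (⟪vec4 a b c d, vec4 w u y z⟫ : ℝ) = a*w + b*u + c*y + d*z := by
  simp [vec4, PiLp.inner_apply, Fin.sum_univ_four, RCLike.inner_apply]; ring

lemma smul_add_cvec (t : ℝ) :
    (2 : ℝ) • γ₁ t + cvec = vec3 (1/2) (-(2 * sin t)) (2 * (cos t - 1) + 1/2) := by
  ext i
  fin_cases i <;>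
    simp [γ₁, cvec, vec3, PiLp.add_apply, PiLp.smul_apply] <;> ring_nf

set_option maxHeartbeats 1000000 in
theorem stmt_18 :
    vec4 (-1) 0 (-1) 2 ∉
      {y : EuclideanSpace ℝ (Fin 4) | ∀ x ∈ Kcone, ⟪x, y⟫ ≤ 0} +
        ((Submodule.span ℝ {vec4 1 0 0 (-2)} : Submodule ℝ (EuclideanSpace ℝ (Fin 4))) :
          Set (EuclideanSpace ℝ (Fin 4))) := by
  rintro ⟨p, hp, v, hv, hq⟩
  obtain ⟨μ, rfl⟩ := Submodule.mem_span_singleton.mp hv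
  -- choose t
  set S : ℝ := max (1 + μ) 1 with hS
  have hS1 : (1 : ℝ) ≤ S := le_max_right _ _
  have hS0 : (0 : ℝ) < S := lt_of_lt_of_le one_pos hS1
  set t : ℝ := 1 / (2 * S) with ht
  have ht0 : 0 < t := by positivity
  have htS : t * S = 1 / 2 := by
    rw [ht]; field_simp
  have ht1 : t ≤ 1 / 2 := by
    rw [ht]
    rw [div_le_div_iff₀ (by positivity) (by norm_num)]
    nlinarith
  have htpi : t ≤ π / 4 := le_trans ht1 (by nlinarith [pi_gt_three])
  clear_value t S
  -- the test point
  have hγmem : γ₁ t ∈ convexHull ℝ (γ₁ '' Set.Icc (0 : ℝ) (π / 4) ∪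
      γ₂ '' Set.Icc (0 : ℝ) (π / 4) ∪ γ₃ '' Set.Icc (0 : ℝ) (π / 4) ∪
      γ₄ '' Set.Icc (0 : ℝ) (π / 4)) := by
    apply subset_convexHull
    exact Or.inl (Or.inl (Or.inl ⟨t, ⟨ht0.le, htpi⟩, rfl⟩))
  have hxC' : (2 : ℝ) • γ₁ t + cvec ∈ C' := ⟨γ₁ t, hγmem, rfl⟩
  have hxK : liftPt ((2 : ℝ) • γ₁ t + cvec) ∈ Kcone :=
    ⟨1, zero_le_one, liftPt ((2 : ℝ) • γ₁ t + cvec), ⟨_, hxC', rfl⟩, (one_smul _ _).symm⟩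
  have hle := hp _ hxK
  -- compute the inner product
  have hq' : p + μ • vec4 1 0 0 (-2) = vec4 (-1) 0 (-1) 2 := hq
  have hp_eq : p = vec4 (-1) 0 (-1) 2 - μ • vec4 1 0 0 (-2) := eq_sub_of_add_eq hq'
  rw [hp_eq, inner_sub_right, real_inner_smul_right, smul_add_cvec, lift_vec3,
    inner_vec4, inner_vec4] at hle
  -- analytic estimate: the inner product is positive
  have hcos : 1 - t ^ 2 / 2 ≤ cos t := Real.one_sub_sq_div_two_le_cos
  have hsin : t - t ^ 3 / 4 < sin t := by
    nlinarith [Real.sin_gt_sub_cube ht0, pow_pos ht0 3]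
  have hμS : 1 + μ ≤ S := by rw [hS]; exact le_max_left _ _
  have hcos1 : cos t ≤ 1 := Real.cos_le_one t
  have key : 0 < 2 * sin t + 4 * (1 + μ) * (cos t - 1) := by
    have h1 : (1 + μ) * (1 - cos t) ≤ S * (1 - cos t) :=
      mul_le_mul_of_nonneg_right hμS (by linarith)
    have h2 : S * (1 - cos t) ≤ S * (t ^ 2 / 2) :=
      mul_le_mul_of_nonneg_left (by linarith) hS0.le
    have h3 : S * (t ^ 2 / 2) = t / 4 := by
      have : t ^ 2 = t * t := sq t
      nlinarith [htS]
    have h4 : t - t ^ 3 / 4 ≥ t - t / 16 := by nlinarith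
    nlinarith
  nlinarith [key]
end

section
/- Let C' = 2·co(γ₁ ∪ γ₂ ∪ γ₃ ∪ γ₄) + (1/2, 0, 1/2) ⊆ ℝ³, K = cone({1} × C') ⊆ ℝ⁴, F = cone({1} × (2·co(γ₃ ∪ γ₄) + (1/2, 0, 1/2))), and q = (−1, 0, −1, 2). Then q ∈ F°, i.e., ⟨q, z⟩ ≤ 0 for all z ∈ F. In particular, ⟨q, (1, 2γ₃(t) + c)⟩ = 2(cos t − 1) ≤ 0 and ⟨q, (1, 2γ₄(t) + c)⟩ = −2 sin t ≤ 0 for all t ∈ [0, π/4]. -/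
open Real Pointwise RealInnerProductSpace

lemma inner_lift (x : EuclideanSpace ℝ (Fin 3)) :
    ⟪vec4 (-1) 0 (-1) 2, liftPt x⟫ = -1 - x 1 + 2 * x 2 := by
  simp [vec4, liftPt, PiLp.inner_apply, Fin.sum_univ_succ, Fin.sum_univ_three]
  ring

lemma hull_bound {w : EuclideanSpace ℝ (Fin 3)}
    (hw : w ∈ convexHull ℝ (γ₃ '' Set.Icc (0 : ℝ) (π / 4) ∪ γ₄ '' Set.Icc (0 : ℝ) (π / 4))) :
    2 * w 2 ≤ w 1 := by
  have hsub : γ₃ '' Set.Icc (0 : ℝ) (π / 4) ∪ γ₄ '' Set.Icc (0 : ℝ) (π / 4) ⊆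
      {v : EuclideanSpace ℝ (Fin 3) | 2 * v 2 ≤ v 1} := by
    rintro v (⟨t, ht, rfl⟩ | ⟨t, ht, rfl⟩)
    · have : cos t ≤ 1 := Real.cos_le_one t
      simp only [γ₃, vec3, Set.mem_setOf_eq, WithLp.equiv_symm_apply, PiLp.toLp_apply,
        Matrix.cons_val_one, Matrix.head_cons, Matrix.cons_val_two, Matrix.tail_cons, Matrix.cons_val_zero]
      linarith
    · have hπ : t ≤ π := le_trans ht.2 (by linarith [Real.pi_pos])
      have : 0 ≤ sin t := Real.sin_nonneg_of_nonneg_of_le_pi ht.1 hπ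
      simp only [γ₄, vec3, Set.mem_setOf_eq, WithLp.equiv_symm_apply, PiLp.toLp_apply,
        Matrix.cons_val_one, Matrix.head_cons, Matrix.cons_val_two, Matrix.tail_cons, Matrix.cons_val_zero]
      linarith
  have hconv : Convex ℝ {v : EuclideanSpace ℝ (Fin 3) | 2 * v 2 ≤ v 1} := by
    intro a ha b hb s t hs ht hst
    simp only [Set.mem_setOf_eq] at ha hb ⊢
    have hadd : ∀ i, (s • a + t • b : EuclideanSpace ℝ (Fin 3)) i = s * a i + t * b i := by
      intro i; rfl
    rw [hadd, hadd]
    nlinarith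
  exact convexHull_min hsub hconv hw

theorem stmt_19 :
    (∀ z ∈ Fface, ⟪vec4 (-1) 0 (-1) 2, z⟫ ≤ 0) ∧
    ∀ t ∈ Set.Icc (0 : ℝ) (π / 4),
      (⟪vec4 (-1) 0 (-1) 2, liftPt ((2 : ℝ) • γ₃ t + cvec)⟫ = 2 * (cos t - 1) ∧
        2 * (cos t - 1) ≤ 0) ∧
      (⟪vec4 (-1) 0 (-1) 2, liftPt ((2 : ℝ) • γ₄ t + cvec)⟫ = -(2 * sin t) ∧
        -(2 * sin t) ≤ 0) := by
  constructor
  · rintro z ⟨r, hr, z', ⟨x, ⟨w, hw, rfl⟩, rfl⟩, rfl⟩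
    rw [real_inner_smul_right, inner_lift]
    dsimp only
    have h1 : ((2 : ℝ) • w + cvec : EuclideanSpace ℝ (Fin 3)) 1 = 2 * w 1 := by
      simp [cvec, vec3]
    have h2 : ((2 : ℝ) • w + cvec : EuclideanSpace ℝ (Fin 3)) 2 = 2 * w 2 + 1 / 2 := by
      simp [cvec, vec3]
    rw [h1, h2]
    have := hull_bound hw
    nlinarith
  · intro t ht
    have hπ : t ≤ π := le_trans ht.2 (by linarith [Real.pi_pos])
    have hsin : 0 ≤ sin t := Real.sin_nonneg_of_nonneg_of_le_pi ht.1 hπ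
    have hcos : cos t ≤ 1 := Real.cos_le_one t
    refine ⟨⟨?_, by linarith⟩, ⟨?_, by linarith⟩⟩
    · rw [inner_lift]
      have h1 : ((2 : ℝ) • γ₃ t + cvec : EuclideanSpace ℝ (Fin 3)) 1 = 2 * (1 - cos t) := by
        simp [cvec, vec3, γ₃]
      have h2 : ((2 : ℝ) • γ₃ t + cvec : EuclideanSpace ℝ (Fin 3)) 2 = 1 / 2 := by
        simp [cvec, vec3, γ₃]
      rw [h1, h2]; ring
    · rw [inner_lift]
      have h1 : ((2 : ℝ) • γ₄ t + cvec : EuclideanSpace ℝ (Fin 3)) 1 = 2 * sin t := by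
        simp [cvec, vec3, γ₄]
      have h2 : ((2 : ℝ) • γ₄ t + cvec : EuclideanSpace ℝ (Fin 3)) 2 = 1 / 2 := by
        simp [cvec, vec3, γ₄]
      rw [h1, h2]; ring
end
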